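/- Characterization of the subdifferential of the energy: for every s ∈ 𝒳 ∩ 𝒜 and every h ∈ L^∞(Ω; ℝ^{N+1}), h belongs to the subdifferential ∂E(s) — meaning E(ŝ) ≥ E(s) + Σ_{i=0}^N ∫_Ω h_i (ŝ_i − s_i) dx for every ŝ ∈ L¹(Ω; ℝ^{N+1}), the inequality being trivially satisfied when E(ŝ) = +∞ — if and only if for a.e. x ∈ Ω the vector h(x) − Ψ(x) belongs to the subdifferential at s(x) of the extended convex function Π(·, x) : ℝ^{N+1} → [0, +∞]. -/

import Mathlib

open MeasureTheory
open scoped ENNReal Classical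

section Aux

lemma aux_comp_aemeasurable {α γ : Type*} [MeasurableSpace α] [MeasurableSpace γ]
    [TopologicalSpace γ] [OpensMeasurableSpace γ] {μ : Measure α}
    {u : α → γ} (hu : AEMeasurable u μ) {S : Set γ} (hS : MeasurableSet S)
    {g : γ → ℝ} (hg : ContinuousOn g S) (hmem : ∀ᵐ x ∂μ, u x ∈ S) :
    AEMeasurable (fun x => g (u x)) μ := by
  have h1 : AEMeasurable g ((μ.map u).restrict S) := hg.aemeasurable hS
  rw [Measure.restrict_eq_self_of_ae_mem ((mem_ae_map_iff hu hS).2 hmem)] at h1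
  exact h1.comp_aemeasurable hu

lemma aux_aemeasurable_pi {α ι : Type*} [MeasurableSpace α] [Countable ι]
    {μ : Measure α} {f : α → ι → ℝ} (h : ∀ i, AEMeasurable (fun x => f x i) μ) :
    AEMeasurable f μ := by
  choose g hg hge using h
  refine ⟨fun x i => g i x, measurable_pi_lambda _ hg, ?_⟩
  filter_upwards [(ae_all_iff).2 hge] with x hx
  funext i; exact hx i

lemma aux_comp_Pc {d N : ℕ} {μ : Measure (Fin d → ℝ)}
    {Pc : (Fin N → ℝ) → (Fin d → ℝ) → ℝ} {S : Set ((Fin N → ℝ) × (Fin d → ℝ))}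
    (hSm : MeasurableSet S)
    (hPcont : ContinuousOn (fun p : (Fin N → ℝ) × (Fin d → ℝ) => Pc p.1 p.2) S)
    (f : (Fin d → ℝ) → Fin N → ℝ)
    (hf : AEMeasurable f μ)
    (hmem : ∀ᵐ x ∂μ, (f x, x) ∈ S) :
    AEMeasurable (fun x => Pc (f x) x) μ :=
  aux_comp_aemeasurable (hf.prodMk aemeasurable_id) hSm hPcont hmem

end Aux

/-- The extended capillary energy density `Π : ℝ^{N+1} × Ω → [0,+∞]`: it equals
`Π(ω(x) s*/σ, x)` when `s ≥ 0` and `σ = Σ_i s_i ≤ ω(x)` (with `s* = (s_1,…,s_N)`,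
and the value `Π(0,x)` when `σ = 0`), and `+∞` otherwise. -/
noncomputable def PiExt {d N : ℕ} (ω : (Fin d → ℝ) → ℝ)
    (Pc : (Fin N → ℝ) → (Fin d → ℝ) → ℝ)
    (s : Fin (N + 1) → ℝ) (x : Fin d → ℝ) : ℝ≥0∞ :=
  if (∀ i, 0 ≤ s i) ∧ ∑ i, s i ≤ ω x then
    (if ∑ i, s i = 0 then ENNReal.ofReal (Pc 0 x)
     else ENNReal.ofReal (Pc (fun j => ω x * s j.succ / ∑ i, s i) x))
  else ⊤

section PiExtLemmas

variable {d N : ℕ} {ω : (Fin d → ℝ) → ℝ} {Pc : (Fin N → ℝ) → (Fin d → ℝ) → ℝ}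
  {v : Fin (N + 1) → ℝ} {x : Fin d → ℝ}

lemma piExt_eq_top_iff :
    PiExt ω Pc v x = ⊤ ↔ ¬ ((∀ i, 0 ≤ v i) ∧ ∑ i, v i ≤ ω x) := by
  unfold PiExt
  split_ifs with h h2
  · exact iff_of_false ENNReal.ofReal_ne_top (not_not_intro h)
  · exact iff_of_false ENNReal.ofReal_ne_top (not_not_intro h)
  · exact iff_of_true rfl h

lemma piExt_eq (hv : ∀ i, 0 ≤ v i) (hs : ∑ i, v i ≤ ω x) :
    PiExt ω Pc v x
      = ENNReal.ofReal (Pc (fun j => ω x * v j.succ / ∑ i, v i) x) := by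
  unfold PiExt
  rw [if_pos ⟨hv, hs⟩]
  by_cases hσ : ∑ i, v i = 0
  · rw [if_pos hσ]
    have hz : ∀ i, v i = 0 := by
      intro i
      have := (Finset.sum_eq_zero_iff_of_nonneg (fun i _ => hv i)).1 hσ
      exact this i (Finset.mem_univ i)
    have : (fun j : Fin N => ω x * v j.succ / ∑ i, v i) = (0 : Fin N → ℝ) := by
      funext j; simp [hz, hσ]
    rw [this]
  · rw [if_neg hσ]

lemma tau_mem (hv : ∀ i, 0 ≤ v i) (hs : ∑ i, v i ≤ ω x) (hω : 0 ≤ ω x) :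
    (∀ j : Fin N, 0 ≤ ω x * v j.succ / ∑ i, v i) ∧
      ∑ j : Fin N, ω x * v j.succ / ∑ i, v i ≤ ω x := by
  have hσ0 : 0 ≤ ∑ i, v i := Finset.sum_nonneg fun i _ => hv i
  constructor
  · intro j
    exact div_nonneg (mul_nonneg hω (hv j.succ)) hσ0
  · have hsum : ∑ j : Fin N, ω x * v j.succ / ∑ i, v i
        = ω x * (∑ j : Fin N, v j.succ) / ∑ i, v i := by
      rw [← Finset.sum_div, ← Finset.mul_sum]
    rw [hsum]
    have hle : ∑ j : Fin N, v j.succ ≤ ∑ i, v i := by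
      rw [Fin.sum_univ_succ]
      nlinarith [hv 0]
    rcases eq_or_lt_of_le hσ0 with hσ | hσ
    · have : ∑ j : Fin N, v j.succ = 0 := by
        have h0 : ∀ j : Fin N, v j.succ = 0 := by
          intro j
          have := (Finset.sum_eq_zero_iff_of_nonneg (fun i _ => hv i)).1 hσ.symm
          exact this j.succ (Finset.mem_univ _)
        exact Finset.sum_eq_zero fun j _ => h0 j
      simp [this, hω]
    · have hnn : 0 ≤ ∑ j : Fin N, v j.succ := Finset.sum_nonneg fun j _ => hv j.succ
      rw [div_le_iff₀ hσ]
      nlinarith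

end PiExtLemmas

lemma isClosed_constraint {d N : ℕ} {Ω : Set (Fin d → ℝ)} {ω : (Fin d → ℝ) → ℝ}
    (hωcont : ContinuousOn ω (closure Ω)) :
    IsClosed {p : (Fin N → ℝ) × (Fin d → ℝ) |
      p.2 ∈ closure Ω ∧ (∀ j, 0 ≤ p.1 j) ∧ ∑ j, p.1 j ≤ ω p.2} := by
  have hC : IsClosed {p : (Fin N → ℝ) × (Fin d → ℝ) |
      p.2 ∈ closure Ω ∧ ∀ j, 0 ≤ p.1 j} := by
    have h1 : IsClosed {p : (Fin N → ℝ) × (Fin d → ℝ) | p.2 ∈ closure Ω} :=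
      isClosed_closure.preimage continuous_snd
    have h2 : IsClosed {p : (Fin N → ℝ) × (Fin d → ℝ) | ∀ j, 0 ≤ p.1 j} := by
      have : {p : (Fin N → ℝ) × (Fin d → ℝ) | ∀ j, 0 ≤ p.1 j}
          = ⋂ j : Fin N, {p | 0 ≤ p.1 j} := by
        ext p; simp
      rw [this]
      exact isClosed_iInter fun j =>
        isClosed_le continuous_const ((continuous_apply j).comp continuous_fst)
    exact h1.inter h2
  have hf : ContinuousOn (fun p : (Fin N → ℝ) × (Fin d → ℝ) => ω p.2 - ∑ j, p.1 j)
      {p : (Fin N → ℝ) × (Fin d → ℝ) | p.2 ∈ closure Ω ∧ ∀ j, 0 ≤ p.1 j} := by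
    apply ContinuousOn.sub
    · exact hωcont.comp continuous_snd.continuousOn (fun p hp => hp.1)
    · exact (continuous_finset_sum _ fun j _ =>
        (continuous_apply j).comp continuous_fst).continuousOn
  have := hf.preimage_isClosed_of_isClosed hC (isClosed_Ici (a := (0:ℝ)))
  convert this using 1
  ext p
  simp only [Set.mem_setOf_eq, Set.mem_inter_iff, Set.mem_preimage, Set.mem_Ici]
  constructor
  · rintro ⟨h1, h2, h3⟩; exact ⟨⟨h1, h2⟩, by linarith⟩
  · rintro ⟨⟨h1, h2⟩, h3⟩; exact ⟨h1, h2, by linarith⟩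

/-- The energy of a configuration: capillary energy plus potential energy,
`E(s) = ∫_Ω (Π(s(x),x) + Σ_i s_i(x) Ψ_i(x)) dx ∈ [0,+∞]`. -/
noncomputable def Energy {d N : ℕ} (Ω : Set (Fin d → ℝ)) (ω : (Fin d → ℝ) → ℝ)
    (Pc : (Fin N → ℝ) → (Fin d → ℝ) → ℝ) (Ψ : Fin (N + 1) → (Fin d → ℝ) → ℝ)
    (s : Fin (N + 1) → (Fin d → ℝ) → ℝ) : ℝ≥0∞ :=
  ∫⁻ x in Ω, (PiExt ω Pc (fun i => s i x) x + ENNReal.ofReal (∑ i, s i x * Ψ i x))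

/-- Characterization of the subdifferential of the energy: for s ∈ 𝒳 ∩ 𝒜 and
h ∈ L^∞(Ω;ℝ^{N+1}), h ∈ ∂E(s) (the integral subgradient inequality holds against
every ŝ ∈ L¹, being trivial when E(ŝ) = +∞) if and only if for a.e. x the vector
h(x) − Ψ(x) is a subgradient at s(x) of the extended convex function Π(·,x). -/
theorem stmt_9 {d N : ℕ} (hN : 1 ≤ N)
    (Ω : Set (Fin d → ℝ)) (hΩo : IsOpen Ω) (hΩconv : Convex ℝ Ω)
    (hΩb : Bornology.IsBounded Ω)
    (ω : (Fin d → ℝ) → ℝ) (hωcont : ContinuousOn ω (closure Ω))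
    (ω₁ ω₂ : ℝ) (hω₁ : 0 < ω₁) (hω₂ : ω₂ < 1)
    (hωb : ∀ x ∈ closure Ω, ω₁ ≤ ω x ∧ ω x ≤ ω₂)
    (Pc : (Fin N → ℝ) → (Fin d → ℝ) → ℝ)
    (hPc0 : ∀ x ∈ closure Ω, ∀ t : Fin N → ℝ,
      (∀ j, 0 ≤ t j) → ∑ j, t j ≤ ω x → 0 ≤ Pc t x)
    (M : ℝ) (hPcM : ∀ x ∈ closure Ω, ∀ t : Fin N → ℝ,
      (∀ j, 0 ≤ t j) → ∑ j, t j ≤ ω x → Pc t x ≤ M)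
    (Ψ : Fin (N + 1) → (Fin d → ℝ) → ℝ)
    (hΨc : ∀ i, ContinuousOn (Ψ i) (closure Ω))
    (hΨ0 : ∀ i, ∀ x ∈ closure Ω, 0 ≤ Ψ i x)
    (m : Fin (N + 1) → ℝ) (hm : ∀ i, 0 < m i)
    (hmass : ∑ i, m i = ∫ x in Ω, ω x)
    (hPcconv : ∀ x ∈ closure Ω,
      ConvexOn ℝ {t : Fin N → ℝ | (∀ j, 0 ≤ t j) ∧ ∑ j, t j ≤ ω x}
        (fun t => Pc t x))
    (hPcont : ContinuousOn (fun p : (Fin N → ℝ) × (Fin d → ℝ) => Pc p.1 p.2)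
      {p : (Fin N → ℝ) × (Fin d → ℝ) |
        p.2 ∈ closure Ω ∧ (∀ j, 0 ≤ p.1 j) ∧ ∑ j, p.1 j ≤ ω p.2})
    (hExtConv : ∀ x ∈ closure Ω, ∀ u v : Fin (N + 1) → ℝ, ∀ a b : ℝ,
      0 ≤ a → 0 ≤ b → a + b = 1 →
      PiExt ω Pc (fun i => a * u i + b * v i) x
        ≤ ENNReal.ofReal a * PiExt ω Pc u x + ENNReal.ofReal b * PiExt ω Pc v x)
    (s : Fin (N + 1) → (Fin d → ℝ) → ℝ)
    (hsint : ∀ i, IntegrableOn (s i) Ω)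
    (hs0 : ∀ i, ∀ᵐ x ∂(volume.restrict Ω), 0 ≤ s i x)
    (hsm : ∀ i, ∫ x in Ω, s i x = m i)
    (hsat : ∀ᵐ x ∂(volume.restrict Ω), ∑ i, s i x = ω x)
    (h : Fin (N + 1) → (Fin d → ℝ) → ℝ)
    (hhmeas : ∀ i, AEStronglyMeasurable (h i) (volume.restrict Ω))
    (hhbdd : ∃ C : ℝ, ∀ i, ∀ᵐ x ∂(volume.restrict Ω), |h i x| ≤ C) :
    (∀ shat : Fin (N + 1) → (Fin d → ℝ) → ℝ, (∀ i, IntegrableOn (shat i) Ω) →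
        Energy Ω ω Pc Ψ shat ≠ ⊤ →
        (Energy Ω ω Pc Ψ s).toReal + ∑ i, ∫ x in Ω, h i x * (shat i x - s i x)
          ≤ (Energy Ω ω Pc Ψ shat).toReal)
      ↔ (∀ᵐ x ∂(volume.restrict Ω),
          PiExt ω Pc (fun i => s i x) x ≠ ⊤ ∧
          ∀ v : Fin (N + 1) → ℝ, PiExt ω Pc v x ≠ ⊤ →
            (PiExt ω Pc (fun i => s i x) x).toReal
                + ∑ i, (h i x - Ψ i x) * (v i - s i x)
              ≤ (PiExt ω Pc v x).toReal) := by
  classical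
  set μ : Measure (Fin d → ℝ) := volume.restrict Ω with hμdef
  have hΩm : MeasurableSet Ω := hΩo.measurableSet
  have hcl : Ω ⊆ closure Ω := subset_closure
  have hvolΩ : volume Ω < ⊤ := hΩb.measure_lt_top
  haveI hfin : IsFiniteMeasure μ := ⟨by rw [hμdef, Measure.restrict_apply_univ]; exact hvolΩ⟩
  have haeΩ : ∀ᵐ x ∂μ, x ∈ Ω := ae_restrict_mem hΩm
  obtain ⟨Cψ, hCψ⟩ : ∃ C : ℝ, ∀ i, ∀ x ∈ closure Ω, |Ψ i x| ≤ C := by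
    have hcomp : IsCompact (closure Ω) := hΩb.isCompact_closure
    choose C hC using fun i => hcomp.exists_bound_of_continuousOn (hΨc i)
    refine ⟨∑ i, |C i|, fun i x hx => ?_⟩
    calc |Ψ i x| = ‖Ψ i x‖ := rfl
    _ ≤ C i := hC i x hx
    _ ≤ |C i| := le_abs_self _
    _ ≤ ∑ i, |C i| := Finset.single_le_sum (f := fun i => |C i|)
        (fun i _ => abs_nonneg _) (Finset.mem_univ i)
  have hΨmeas : ∀ i, AEStronglyMeasurable (Ψ i) μ := fun i =>
    (((hΨc i).mono hcl).aemeasurable hΩm).aestronglyMeasurable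
  have hΨint : ∀ i, Integrable (Ψ i) μ := fun i => by
    refine Integrable.mono' (integrable_const Cψ) (hΨmeas i) ?_
    filter_upwards [haeΩ] with x hx
    simpa [Real.norm_eq_abs] using hCψ i x (hcl hx)
  have hΨnn : ∀ᵐ x ∂μ, ∀ i, 0 ≤ Ψ i x := by
    filter_upwards [haeΩ] with x hx i
    exact hΨ0 i x (hcl hx)
  obtain ⟨C, hC⟩ := hhbdd
  have hhint : ∀ i (f : (Fin d → ℝ) → ℝ), Integrable f μ →
      Integrable (fun x => h i x * f x) μ := fun i f hf =>
    hf.bdd_mul (hhmeas i)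
      (by filter_upwards [hC i] with x hx; simpa [Real.norm_eq_abs] using hx)
  have hs0' : ∀ᵐ x ∂μ, ∀ i, 0 ≤ s i x := (ae_all_iff).2 hs0
  set S : Set ((Fin N → ℝ) × (Fin d → ℝ)) := {p : (Fin N → ℝ) × (Fin d → ℝ) |
        p.2 ∈ closure Ω ∧ (∀ j, 0 ≤ p.1 j) ∧ ∑ j, p.1 j ≤ ω p.2} with hSdef
  have hSm : MeasurableSet S := (isClosed_constraint hωcont).measurableSet
  set ps : (Fin d → ℝ) → ℝ := fun x => Pc (fun j => s j.succ x) x with hpsdef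
  have hpsS : ∀ᵐ x ∂μ, ((fun j => s j.succ x), x) ∈ S := by
    filter_upwards [haeΩ, hs0', hsat] with x hx h0 hsum
    refine ⟨hcl hx, fun j => h0 j.succ, ?_⟩
    rw [← hsum, Fin.sum_univ_succ]
    nlinarith [h0 0]
  have hpsmeas : AEMeasurable ps μ := by
    have hu0 : AEMeasurable
        (fun x : Fin d → ℝ => ((fun j => s j.succ x) : Fin N → ℝ)) μ :=
      aux_aemeasurable_pi fun j => (hsint j.succ).aemeasurable
    rw [hpsdef]
    exact aux_comp_Pc hSm hPcont (fun x j => s j.succ x) hu0 hpsS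
  have hps_bounds : ∀ᵐ x ∂μ, 0 ≤ ps x ∧ ps x ≤ M := by
    filter_upwards [haeΩ, hs0', hsat] with x hx h0 hsum
    have ht0 : ∀ j : Fin N, 0 ≤ s j.succ x := fun j => h0 j.succ
    have hts : ∑ j : Fin N, s j.succ x ≤ ω x := by
      rw [← hsum, Fin.sum_univ_succ]; nlinarith [h0 0]
    exact ⟨hPc0 x (hcl hx) _ ht0 hts, hPcM x (hcl hx) _ ht0 hts⟩
  have hpsint : Integrable ps μ := by
    refine Integrable.mono' (integrable_const M) hpsmeas.aestronglyMeasurable ?_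
    filter_upwards [hps_bounds] with x hx
    rw [Real.norm_eq_abs, abs_of_nonneg hx.1]; exact hx.2
  have hsψint : ∀ i, Integrable (fun x => s i x * Ψ i x) μ := fun i => by
    have := (hsint i).bdd_mul (hΨmeas i)
      (by filter_upwards [haeΩ] with x hx;
          simpa [Real.norm_eq_abs] using hCψ i x (hcl hx))
    simpa [mul_comm] using this
  set g : (Fin d → ℝ) → ℝ := fun x => ps x + ∑ i, s i x * Ψ i x with hgdef
  have hgint : Integrable g μ :=
    hpsint.add (integrable_finset_sum _ fun i _ => hsψint i)
  have hg0 : ∀ᵐ x ∂μ, 0 ≤ g x := by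
    filter_upwards [hps_bounds, hs0', hΨnn] with x h1 h2 h3
    have : 0 ≤ ∑ i, s i x * Ψ i x :=
      Finset.sum_nonneg fun i _ => mul_nonneg (h2 i) (h3 i)
    simp only [hgdef]
    linarith [h1.1]
  have haePi : ∀ᵐ x ∂μ,
      PiExt ω Pc (fun i => s i x) x = ENNReal.ofReal (ps x) := by
    filter_upwards [haeΩ, hs0', hsat] with x hx h0 hsum
    have hωpos : 0 < ω x := lt_of_lt_of_le hω₁ (hωb x (hcl hx)).1
    rw [piExt_eq h0 (le_of_eq hsum)]
    have harg : (fun j : Fin N => ω x * s j.succ x / ∑ i, s i x)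
        = fun j => s j.succ x := by
      funext j
      rw [hsum]
      exact mul_div_cancel_left₀ _ (ne_of_gt hωpos)
    rw [harg]
  have haeInt : (fun x => PiExt ω Pc (fun i => s i x) x
        + ENNReal.ofReal (∑ i, s i x * Ψ i x)) =ᵐ[μ]
        fun x => ENNReal.ofReal (g x) := by
    filter_upwards [haePi, hps_bounds, hs0', hΨnn] with x h1 h2 h3 h4
    rw [h1, hgdef]
    rw [ENNReal.ofReal_add h2.1
      (Finset.sum_nonneg fun i _ => mul_nonneg (h3 i) (h4 i))]
  have hEs : Energy Ω ω Pc Ψ s = ENNReal.ofReal (∫ x, g x ∂μ) := by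
    rw [Energy, ← hμdef, lintegral_congr_ae haeInt]
    exact (MeasureTheory.ofReal_integral_eq_lintegral_ofReal hgint hg0).symm
  have hEsne : Energy Ω ω Pc Ψ s ≠ ⊤ := by rw [hEs]; exact ENNReal.ofReal_ne_top
  have hEsR : (Energy Ω ω Pc Ψ s).toReal = ∫ x, g x ∂μ := by
    rw [hEs, ENNReal.toReal_ofReal (integral_nonneg_of_ae hg0)]
  constructor
  · intro H
    have key : ∀ q : Fin (N + 1) → ℝ, (∀ i, 0 ≤ q i) →
        ∀ᵐ x ∂μ, (∑ i, q i ≤ ω x) →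
          ps x + ∑ i, (h i x - Ψ i x) * (q i - s i x)
            ≤ (PiExt ω Pc q x).toReal := by
      intro q hq
      have hσq0 : 0 ≤ ∑ i, q i := Finset.sum_nonneg fun i _ => hq i
      have hUo : IsOpen (Ω ∩ ω ⁻¹' Set.Iio (∑ i, q i)) :=
        (hωcont.mono hcl).isOpen_inter_preimage hΩo isOpen_Iio
      set D : Set (Fin d → ℝ) := Ω \ (Ω ∩ ω ⁻¹' Set.Iio (∑ i, q i)) with hDdef
      have hDm : MeasurableSet D := hΩm.diff hUo.measurableSet
      have hDΩ : D ⊆ Ω := Set.diff_subset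
      have hDchar : ∀ x, x ∈ D ↔ (x ∈ Ω ∧ ∑ i, q i ≤ ω x) := by
        intro x
        simp only [hDdef, Set.mem_diff, Set.mem_inter_iff, Set.mem_preimage,
          Set.mem_Iio, not_and, not_lt]
        constructor
        · rintro ⟨h1, h2⟩; exact ⟨h1, h2 h1⟩
        · rintro ⟨h1, h2⟩; exact ⟨h1, fun _ => h2⟩
      set ν : Measure (Fin d → ℝ) := volume.restrict D with hνdef
      have hμD : μ.restrict D = ν := by
        rw [hμdef, hνdef, Measure.restrict_restrict hDm,
          Set.inter_eq_self_of_subset_left hDΩ]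
      haveI : IsFiniteMeasure ν := ⟨by
        rw [hνdef, Measure.restrict_apply_univ]
        exact lt_of_le_of_lt (measure_mono hDΩ) hvolΩ⟩
      have hνle : ν ≤ μ := by rw [← hμD]; exact Measure.restrict_le_self
      set τq : (Fin d → ℝ) → Fin N → ℝ :=
        fun x j => ω x * q j.succ / ∑ i, q i with hτq
      set pq : (Fin d → ℝ) → ℝ := fun x => Pc (τq x) x with hpq
      have haeD : ∀ᵐ x ∂ν, x ∈ D := ae_restrict_mem hDm
      have hτmem : ∀ x ∈ D, (∀ j, 0 ≤ τq x j) ∧ ∑ j, τq x j ≤ ω x := by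
        intro x hxD
        obtain ⟨hxΩ, hσ⟩ := (hDchar x).1 hxD
        have hω0 : 0 ≤ ω x := le_of_lt (lt_of_lt_of_le hω₁ (hωb x (hcl hxΩ)).1)
        exact tau_mem hq hσ hω0
      have hpqS : ∀ x ∈ D, (τq x, x) ∈ S := by
        intro x hxD
        obtain ⟨hxΩ, _⟩ := (hDchar x).1 hxD
        exact ⟨hcl hxΩ, (hτmem x hxD).1, (hτmem x hxD).2⟩
      have hpq_bounds : ∀ x ∈ D, 0 ≤ pq x ∧ pq x ≤ M := by
        intro x hxD
        obtain ⟨hxΩ, _⟩ := (hDchar x).1 hxD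
        exact ⟨hPc0 x (hcl hxΩ) _ (hτmem x hxD).1 (hτmem x hxD).2,
          hPcM x (hcl hxΩ) _ (hτmem x hxD).1 (hτmem x hxD).2⟩
      have hPiq : ∀ x ∈ D, PiExt ω Pc q x = ENNReal.ofReal (pq x) := by
        intro x hxD
        obtain ⟨_, hσ⟩ := (hDchar x).1 hxD
        rw [piExt_eq hq hσ]
      have hωmeasν : AEMeasurable ω ν :=
        (hωcont.mono (hDΩ.trans hcl)).aemeasurable hDm
      have hτmeas : AEMeasurable τq ν :=
        aux_aemeasurable_pi fun j => (hωmeasν.mul_const (q j.succ)).div_const _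
      have hpqmeas : AEMeasurable pq ν := by
        rw [hpq]
        refine aux_comp_Pc hSm hPcont τq hτmeas ?_
        filter_upwards [haeD] with x hx
        exact hpqS x hx
      have hpqint : Integrable pq ν := by
        refine Integrable.mono' (integrable_const M) hpqmeas.aestronglyMeasurable ?_
        filter_upwards [haeD] with x hx
        rw [Real.norm_eq_abs, abs_of_nonneg (hpq_bounds x hx).1]
        exact (hpq_bounds x hx).2
      have hqψint : Integrable (fun x => ∑ i, q i * Ψ i x) μ :=
        integrable_finset_sum _ fun i _ => (hΨint i).const_mul (q i)
      have hqsint : ∀ i, Integrable (fun x => h i x * (q i - s i x)) μ :=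
        fun i => hhint i (fun x => q i - s i x)
          ((integrable_const (q i)).sub (hsint i))
      set Gq : (Fin d → ℝ) → ℝ := fun x =>
        (pq x + ∑ i, q i * Ψ i x - g x) - ∑ i, h i x * (q i - s i x) with hGq
      have hGqint : Integrable Gq ν := by
        simp only [hGq]
        exact ((hpqint.add (hqψint.mono_measure hνle)).sub
          (hgint.mono_measure hνle)).sub
          (integrable_finset_sum _ fun i _ => (hqsint i).mono_measure hνle)
      have key2 : ∀ᵐ x ∂ν, 0 ≤ Gq x := by
        refine ae_nonneg_of_forall_setIntegral_nonneg hGqint ?_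
        intro t htm htfin
        set B : Set (Fin d → ℝ) := t ∩ D with hB
        have hBm : MeasurableSet B := htm.inter hDm
        have hBD : B ⊆ D := Set.inter_subset_right
        have hBΩ : B ⊆ Ω := hBD.trans hDΩ
        have hrBμ : volume.restrict B ≤ μ := by
          rw [hμdef]; exact Measure.restrict_mono hBΩ le_rfl
        have hrBν : volume.restrict B ≤ ν := by
          rw [hνdef]; exact Measure.restrict_mono hBD le_rfl
        set sb : Fin (N + 1) → (Fin d → ℝ) → ℝ :=
          fun i x => if x ∈ B then q i else s i x with hsb
        have hsbint : ∀ i, IntegrableOn (sb i) Ω := by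
          intro i
          have hrw : sb i = fun x =>
              s i x + Set.indicator B (fun x => q i - s i x) x := by
            funext x
            by_cases hx : x ∈ B <;> simp [hsb, Set.indicator_apply, hx]
          rw [hrw]
          exact (hsint i).add
            (((integrable_const (q i)).sub (hsint i)).indicator hBm)
        set gB : (Fin d → ℝ) → ℝ := fun x =>
          g x + Set.indicator B (fun x => pq x + ∑ i, q i * Ψ i x - g x) x
          with hgB
        have hIB : IntegrableOn (fun x => pq x + ∑ i, q i * Ψ i x - g x)
            B volume :=
          ((hpqint.mono_measure hrBν).add (hqψint.mono_measure hrBμ)).sub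
            (hgint.mono_measure hrBμ)
        have hindint : Integrable
            (Set.indicator B fun x => pq x + ∑ i, q i * Ψ i x - g x) μ :=
          (hIB.integrable_indicator hBm).mono_measure
            (by rw [hμdef]; exact Measure.restrict_le_self)
        have hgBint : Integrable gB μ := hgint.add hindint
        have hgB0 : ∀ᵐ x ∂μ, 0 ≤ gB x := by
          filter_upwards [hg0, hΨnn] with x h1 h2
          simp only [hgB]
          by_cases hx : x ∈ B
          · rw [Set.indicator_of_mem hx]
            have h3 := hpq_bounds x (hBD hx)
            have h4 : 0 ≤ ∑ i, q i * Ψ i x :=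
              Finset.sum_nonneg fun i _ => mul_nonneg (hq i) (h2 i)
            linarith
          · rw [Set.indicator_of_notMem hx]; linarith
        have haeInt2 : (fun x => PiExt ω Pc (fun i => sb i x) x
              + ENNReal.ofReal (∑ i, sb i x * Ψ i x)) =ᵐ[μ]
              fun x => ENNReal.ofReal (gB x) := by
          filter_upwards [haeInt, hg0, hΨnn] with x h1 h2 h3
          by_cases hx : x ∈ B
          · have hsbx : (fun i => sb i x) = q := by
              funext i; simp [hsb, hx]
            have hsum2 : ∑ i, sb i x * Ψ i x = ∑ i, q i * Ψ i x :=
              Finset.sum_congr rfl fun i _ => by simp [hsb, hx]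
            rw [hsbx, hsum2, hPiq x (hBD hx)]
            simp only [hgB]
            rw [Set.indicator_of_mem hx,
              ← ENNReal.ofReal_add (hpq_bounds x (hBD hx)).1
                (Finset.sum_nonneg fun i _ => mul_nonneg (hq i) (h3 i))]
            congr 1
            ring
          · have hsbx : (fun i => sb i x) = fun i => s i x := by
              funext i; simp [hsb, hx]
            have hsum2 : ∑ i, sb i x * Ψ i x = ∑ i, s i x * Ψ i x :=
              Finset.sum_congr rfl fun i _ => by simp [hsb, hx]
            rw [hsbx, hsum2, h1]
            simp only [hgB]
            rw [Set.indicator_of_notMem hx, add_zero]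
        have hEb : Energy Ω ω Pc Ψ sb = ENNReal.ofReal (∫ x, gB x ∂μ) := by
          rw [Energy, ← hμdef, lintegral_congr_ae haeInt2]
          exact (MeasureTheory.ofReal_integral_eq_lintegral_ofReal
            hgBint hgB0).symm
        have hEbne : Energy Ω ω Pc Ψ sb ≠ ⊤ := by
          rw [hEb]; exact ENNReal.ofReal_ne_top
        have hH := H sb hsbint hEbne
        rw [hEsR, hEb, ENNReal.toReal_ofReal (integral_nonneg_of_ae hgB0)] at hH
        have hdiff : ∀ i, (fun x => h i x * (sb i x - s i x))
            = Set.indicator B (fun x => h i x * (q i - s i x)) := by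
          intro i; funext x
          by_cases hx : x ∈ B <;> simp [hsb, Set.indicator_apply, hx]
        have hgBsplit : ∫ x, gB x ∂μ = ∫ x, g x ∂μ
            + ∫ x in B, (pq x + ∑ i, q i * Ψ i x - g x) ∂μ := by
          simp only [hgB]
          rw [integral_add hgint hindint, integral_indicator hBm]
        have hhsb : ∀ i, ∫ x, h i x * (sb i x - s i x) ∂μ
            = ∫ x in B, h i x * (q i - s i x) ∂μ := by
          intro i
          rw [hdiff i, integral_indicator hBm]
        have hresB : μ.restrict B = volume.restrict B := by
          rw [hμdef, Measure.restrict_restrict hBm,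
            Set.inter_eq_self_of_subset_left hBΩ]
        have hνt : ν.restrict t = μ.restrict B := by
          rw [hνdef, Measure.restrict_restrict htm, ← hB, hresB]
        have hμBle : μ.restrict B ≤ μ := Measure.restrict_le_self
        have hGqB : ∫ x in B, Gq x ∂μ
            = ∫ x in B, (pq x + ∑ i, q i * Ψ i x - g x) ∂μ
              - ∑ i, ∫ x in B, h i x * (q i - s i x) ∂μ := by
          simp only [hGq]
          rw [integral_sub (by rw [hresB]; exact hIB)
              (integrable_finset_sum _ fun i _ =>
                (hqsint i).mono_measure hμBle),
            integral_finset_sum _ fun i _ => (hqsint i).mono_measure hμBle]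
        have hfinal : 0 ≤ ∫ x in B, Gq x ∂μ := by
          rw [hGqB]
          have hsum3 : ∑ i, ∫ x, h i x * (sb i x - s i x) ∂μ
              = ∑ i, ∫ x in B, h i x * (q i - s i x) ∂μ :=
            Finset.sum_congr rfl fun i _ => hhsb i
          rw [hgBsplit, hsum3] at hH
          linarith
        calc (0:ℝ) ≤ ∫ x in B, Gq x ∂μ := hfinal
          _ = ∫ x in t, Gq x ∂ν := by rw [hνt]
      have key2' : ∀ᵐ x ∂μ, x ∈ D → 0 ≤ Gq x := by
        rw [← ae_restrict_iff' hDm, hμD]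
        exact key2
      filter_upwards [key2', haeΩ, hps_bounds] with x hx hxΩ hpsb
      intro hσ
      have hxD : x ∈ D := (hDchar x).2 ⟨hxΩ, hσ⟩
      have h0 := hx hxD
      rw [hPiq x hxD, ENNReal.toReal_ofReal (hpq_bounds x hxD).1]
      have hsum1 : ∑ i, (h i x - Ψ i x) * (q i - s i x)
          = ∑ i, h i x * (q i - s i x)
            - (∑ i, q i * Ψ i x - ∑ i, s i x * Ψ i x) := by
        rw [← Finset.sum_sub_distrib, ← Finset.sum_sub_distrib]
        exact Finset.sum_congr rfl fun i _ => by ring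
      simp only [hGq, hgdef] at h0
      rw [hsum1]
      linarith
    have keyQ : ∀ᵐ x ∂μ, ∀ q : Fin (N + 1) → ℚ, (∀ i, 0 ≤ q i) →
        (∑ i, (q i : ℝ)) ≤ ω x →
          ps x + ∑ i, (h i x - Ψ i x) * ((q i : ℝ) - s i x)
            ≤ (PiExt ω Pc (fun i => (q i : ℝ)) x).toReal := by
      rw [ae_all_iff]
      intro q
      by_cases hq : ∀ i, 0 ≤ q i
      · filter_upwards [key (fun i => (q i : ℝ))
            (fun i => by show (0:ℝ) ≤ (q i : ℝ); exact_mod_cast hq i)] with x hx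
        intro _ h'
        exact hx h'
      · filter_upwards with x hx
        exact absurd hx hq
    filter_upwards [keyQ, haePi, hps_bounds, haeΩ] with x hkq h1 h2 hxΩ
    have hω0 : 0 ≤ ω x := le_of_lt (lt_of_lt_of_le hω₁ (hωb x (hcl hxΩ)).1)
    refine ⟨by rw [h1]; exact ENNReal.ofReal_ne_top, ?_⟩
    intro v hvne
    have hcond : (∀ i, 0 ≤ v i) ∧ ∑ i, v i ≤ ω x :=
      not_not.1 fun hc => hvne (piExt_eq_top_iff.2 hc)
    obtain ⟨hv0, hvs⟩ := hcond
    rw [h1, ENNReal.toReal_ofReal h2.1]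
    have hτv := tau_mem hv0 hvs hω0
    have hPiv : (PiExt ω Pc v x).toReal
        = Pc (fun j => ω x * v j.succ / ∑ i, v i) x := by
      rw [piExt_eq hv0 hvs]
      exact ENNReal.toReal_ofReal (hPc0 x (hcl hxΩ) _ hτv.1 hτv.2)
    rw [hPiv]
    by_cases hσv : ∑ i, v i = 0
    · -- v = 0
      have hvz : ∀ i, v i = 0 := by
        intro i
        have := (Finset.sum_eq_zero_iff_of_nonneg (fun i _ => hv0 i)).1 hσv
        exact this i (Finset.mem_univ i)
      have hz := hkq (fun _ => 0) (fun i => le_refl 0)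
        (by simpa using hω0)
      have hveq : (fun i : Fin (N + 1) => (((0:ℚ) : ℝ))) = v := by
        funext i; simp [hvz i]
      have hPi0 : (PiExt ω Pc (fun i : Fin (N + 1) => (((0:ℚ) : ℝ))) x).toReal
          = Pc (fun j => ω x * v j.succ / ∑ i, v i) x := by
        rw [hveq, hPiv.symm, hPiv]
      rw [hPi0] at hz
      calc ps x + ∑ i, (h i x - Ψ i x) * (v i - s i x)
          = ps x + ∑ i, (h i x - Ψ i x) * (((0:ℚ):ℝ) - s i x) := by
            congr 1
            exact Finset.sum_congr rfl fun i _ => by rw [hvz i]; norm_num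
        _ ≤ _ := hz
    · have hσvpos : 0 < ∑ i, v i :=
        lt_of_le_of_ne (Finset.sum_nonneg fun i _ => hv0 i) (Ne.symm hσv)
      have hsel : ∀ (n : ℕ) (i : Fin (N + 1)), ∃ qr : ℚ,
          0 ≤ (qr : ℝ) ∧ (qr : ℝ) ≤ v i ∧
            (1 - 1/(n+1 : ℝ)) * v i ≤ (qr : ℝ) := by
        intro n i
        have hfac : 0 ≤ 1 - 1/(n+1:ℝ) := by
          have h1n : 1/(n+1:ℝ) ≤ 1 := by
            rw [div_le_one (by positivity)]
            have hn : (0:ℝ) ≤ (n:ℝ) := Nat.cast_nonneg n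
            linarith
          linarith
        rcases eq_or_lt_of_le (hv0 i) with hz | hp
        · exact ⟨0, by norm_num, by rw [← hz]; norm_num, by rw [← hz]; norm_num⟩
        · have hlt : (1 - 1/(n+1:ℝ)) * v i < v i := by
            have h1 : 0 < 1/(n+1:ℝ) := by positivity
            nlinarith
          obtain ⟨qr, hq1, hq2⟩ := exists_rat_btwn hlt
          exact ⟨qr, le_trans (mul_nonneg hfac (le_of_lt hp)) (le_of_lt hq1),
            le_of_lt hq2, le_of_lt hq1⟩
      choose qn hqn0 hqnle hqnge using hsel
      have hqnsum : ∀ n, ∑ i, ((qn n i : ℝ)) ≤ ω x := fun n =>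
        le_trans (Finset.sum_le_sum fun i _ => hqnle n i) hvs
      have hkey_n : ∀ n, ps x + ∑ i, (h i x - Ψ i x) * ((qn n i : ℝ) - s i x)
          ≤ (PiExt ω Pc (fun i => (qn n i : ℝ)) x).toReal := fun n =>
        hkq (qn n) (fun i => by exact_mod_cast hqn0 n i) (hqnsum n)
      have hRHS : ∀ n, (PiExt ω Pc (fun i => (qn n i : ℝ)) x).toReal
          = Pc (fun j => ω x * (qn n j.succ : ℝ) / ∑ i, (qn n i : ℝ)) x := by
        intro n
        have hτn := tau_mem (fun i => hqn0 n i) (hqnsum n) hω0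
        rw [piExt_eq (fun i => hqn0 n i) (hqnsum n)]
        exact ENNReal.toReal_ofReal (hPc0 x (hcl hxΩ) _ hτn.1 hτn.2)
      have htend : ∀ i, Filter.Tendsto (fun n => (qn n i : ℝ))
          Filter.atTop (nhds (v i)) := by
        intro i
        refine tendsto_of_tendsto_of_tendsto_of_le_of_le
          (g := fun n : ℕ => (1 - 1/(n+1:ℝ)) * v i) (h := fun _ : ℕ => v i)
          ?_ tendsto_const_nhds (fun n => hqnge n i) (fun n => hqnle n i)
        have hone : Filter.Tendsto (fun n : ℕ => 1 - 1/(n+1:ℝ))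
            Filter.atTop (nhds 1) := by
          have h0 := tendsto_one_div_add_atTop_nhds_zero_nat (𝕜 := ℝ)
          have := (tendsto_const_nhds (x := (1:ℝ))
            (f := Filter.atTop (α := ℕ))).sub h0
          simpa using this
        simpa using hone.mul_const (v i)
      have hσtend : Filter.Tendsto (fun n => ∑ i, ((qn n i : ℝ)))
          Filter.atTop (nhds (∑ i, v i)) :=
        tendsto_finset_sum _ fun i _ => htend i
      have hτtend : ∀ j : Fin N, Filter.Tendsto
          (fun n => ω x * (qn n j.succ : ℝ) / ∑ i, (qn n i : ℝ))
          Filter.atTop (nhds (ω x * v j.succ / ∑ i, v i)) := fun j =>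
        (Filter.Tendsto.mul tendsto_const_nhds (htend j.succ)).div hσtend hσv
      have hmemS : ∀ n, (((fun j => ω x * (qn n j.succ : ℝ) / ∑ i, (qn n i : ℝ))
          : Fin N → ℝ), x) ∈ S := by
        intro n
        have hτn := tau_mem (fun i => hqn0 n i) (hqnsum n) hω0
        exact ⟨hcl hxΩ, hτn.1, hτn.2⟩
      have hmemSv : (((fun j => ω x * v j.succ / ∑ i, v i) : Fin N → ℝ), x) ∈ S :=
        ⟨hcl hxΩ, hτv.1, hτv.2⟩
      have hPc_tend : Filter.Tendsto
          (fun n => Pc (fun j => ω x * (qn n j.succ : ℝ) / ∑ i, (qn n i : ℝ)) x)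
          Filter.atTop (nhds (Pc (fun j => ω x * v j.succ / ∑ i, v i) x)) := by
        have hc : ContinuousWithinAt
            (fun p : (Fin N → ℝ) × (Fin d → ℝ) => Pc p.1 p.2) S
            ((fun j => ω x * v j.succ / ∑ i, v i), x) := hPcont _ hmemSv
        have hseq : Filter.Tendsto
            (fun n => (((fun j => ω x * (qn n j.succ : ℝ) / ∑ i, (qn n i : ℝ))
              : Fin N → ℝ), x))
            Filter.atTop
            (nhdsWithin ((fun j => ω x * v j.succ / ∑ i, v i, x)) S) := by
          rw [tendsto_nhdsWithin_iff]
          constructor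
          · refine Filter.Tendsto.prodMk_nhds ?_ tendsto_const_nhds
            rw [tendsto_pi_nhds]
            intro j
            exact hτtend j
          · exact Filter.Eventually.of_forall hmemS
        exact hc.tendsto.comp hseq
      have hLHS_tend : Filter.Tendsto
          (fun n => ps x + ∑ i, (h i x - Ψ i x) * ((qn n i : ℝ) - s i x))
          Filter.atTop
          (nhds (ps x + ∑ i, (h i x - Ψ i x) * (v i - s i x))) := by
        refine Filter.Tendsto.add tendsto_const_nhds ?_
        refine tendsto_finset_sum _ fun i _ => ?_
        exact Filter.Tendsto.mul tendsto_const_nhds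
          ((htend i).sub tendsto_const_nhds)
      refine le_of_tendsto_of_tendsto' hLHS_tend ?_ hkey_n
      have : (fun n => (PiExt ω Pc (fun i => (qn n i : ℝ)) x).toReal)
          = fun n => Pc (fun j => ω x * (qn n j.succ : ℝ) / ∑ i, (qn n i : ℝ)) x := by
        funext n; exact hRHS n
      rw [this]
      exact hPc_tend
  · intro hae shat hshatint hEhatne
    set W : (Fin d → ℝ) → ℝ := fun x => g x + ∑ i, h i x * (shat i x - s i x)
      with hWdef
    have hint2 : ∀ i : Fin (N + 1),
        Integrable (fun x => h i x * (shat i x - s i x)) μ :=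
      fun i => hhint i (fun x => shat i x - s i x) ((hshatint i).sub (hsint i))
    have hWint : Integrable W μ :=
      hgint.add (integrable_finset_sum _ fun i _ => hint2 i)
    have hptwise : ∀ᵐ x ∂μ, ENNReal.ofReal (W x)
        ≤ PiExt ω Pc (fun i => shat i x) x
          + ENNReal.ofReal (∑ i, shat i x * Ψ i x) := by
      filter_upwards [hae, haePi, hps_bounds, hΨnn] with x hx h1 h2 h4
      by_cases hQ : PiExt ω Pc (fun i => shat i x) x = ⊤
      · rw [hQ]; simp
      · have hsub := hx.2 (fun i => shat i x) hQ
        have hPsr : (PiExt ω Pc (fun i => s i x) x).toReal = ps x := by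
          rw [h1, ENNReal.toReal_ofReal h2.1]
        rw [hPsr] at hsub
        have hsum1 : ∑ i, (h i x - Ψ i x) * (shat i x - s i x)
            = ∑ i, h i x * (shat i x - s i x)
              - (∑ i, shat i x * Ψ i x - ∑ i, s i x * Ψ i x) := by
          rw [← Finset.sum_sub_distrib, ← Finset.sum_sub_distrib]
          exact Finset.sum_congr rfl fun i _ => by ring
        have hreal : W x ≤ (PiExt ω Pc (fun i => shat i x) x).toReal
            + ∑ i, shat i x * Ψ i x := by
          simp only [hWdef, hgdef]
          rw [hsum1] at hsub
          linarith
        calc ENNReal.ofReal (W x)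
            ≤ ENNReal.ofReal ((PiExt ω Pc (fun i => shat i x) x).toReal
                + ∑ i, shat i x * Ψ i x) := ENNReal.ofReal_le_ofReal hreal
          _ ≤ ENNReal.ofReal ((PiExt ω Pc (fun i => shat i x) x).toReal)
                + ENNReal.ofReal (∑ i, shat i x * Ψ i x) := ENNReal.ofReal_add_le
          _ = _ := by rw [ENNReal.ofReal_toReal hQ]
    have hW1 : ENNReal.ofReal (∫ x, W x ∂μ) ≤ Energy Ω ω Pc Ψ shat := by
      have hWmax : Integrable (fun x => max (W x) 0) μ := hWint.pos_part
      have h1 : ∫ x, W x ∂μ ≤ ∫ x, max (W x) 0 ∂μ :=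
        integral_mono hWint hWmax (fun x => le_max_left _ _)
      have h2 : ENNReal.ofReal (∫ x, max (W x) 0 ∂μ)
          = ∫⁻ x, ENNReal.ofReal (max (W x) 0) ∂μ :=
        MeasureTheory.ofReal_integral_eq_lintegral_ofReal hWmax
          (Filter.Eventually.of_forall fun x => le_max_right _ _)
      have h3 : ∫⁻ x, ENNReal.ofReal (max (W x) 0) ∂μ
          = ∫⁻ x, ENNReal.ofReal (W x) ∂μ := by
        apply lintegral_congr fun x => ?_
        rcases le_total (W x) 0 with hw | hw
        · rw [max_eq_right hw, ENNReal.ofReal_of_nonpos hw]; simp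
        · rw [max_eq_left hw]
      have h4 : ∫⁻ x, ENNReal.ofReal (W x) ∂μ
          ≤ ∫⁻ x, (PiExt ω Pc (fun i => shat i x) x
              + ENNReal.ofReal (∑ i, shat i x * Ψ i x)) ∂μ :=
        lintegral_mono_ae hptwise
      calc ENNReal.ofReal (∫ x, W x ∂μ)
          ≤ ENNReal.ofReal (∫ x, max (W x) 0 ∂μ) := ENNReal.ofReal_le_ofReal h1
        _ = ∫⁻ x, ENNReal.ofReal (W x) ∂μ := by rw [h2, h3]
        _ ≤ _ := by rw [Energy, ← hμdef]; exact h4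
    have hWR : ∫ x, W x ∂μ ≤ (Energy Ω ω Pc Ψ shat).toReal := by
      rcases le_total (∫ x, W x ∂μ) 0 with hw | hw
      · exact hw.trans ENNReal.toReal_nonneg
      · exact (ENNReal.ofReal_le_iff_le_toReal hEhatne).1 hW1
    have hWsplit : ∫ x, W x ∂μ
        = ∫ x, g x ∂μ + ∑ i, ∫ x, h i x * (shat i x - s i x) ∂μ := by
      simp only [hWdef]
      rw [integral_add hgint (integrable_finset_sum _ fun i _ => hint2 i),
        integral_finset_sum _ fun i _ => hint2 i]
    rw [hEsR]
    linarith [hWR, hWsplit]
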